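/- The sequences of labeling functions (λ^k)_{k∈ℕ} computed by the fixpoint iteration are pointwise non-increasing: for every vertex v of the extended game, λ^{k+1}(v) ≤ λ^k(v); consequently the sets Λ^{k+1}(v) ⊆ Λ^k(v) of λ-consistent plays are non-increasing. -/

import Mathlib

open scoped Classical

namespace SPE

variable {V : Type*} {P : Type*}

/-- Vertices of the extended game: a base vertex together with the set of players
having already visited their target set. -/
abbrev XV (V P : Type*) := V × Set P

/-- Edges of the extended game induced by base edges `E` and target sets `F`. -/
def XEdge (E : V → V → Prop) (F : P → Set V) (a b : XV V P) : Prop :=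
  E a.1 b.1 ∧ b.2 = a.2 ∪ {i | b.1 ∈ F i}

/-- Plays of the extended game starting at `x`. -/
def IsPlay (E : V → V → Prop) (F : P → Set V) (x : XV V P) (ρ : ℕ → XV V P) : Prop :=
  ρ 0 = x ∧ ∀ k, XEdge E F (ρ k) (ρ (k + 1))

/-- Cost of player `i` along the suffix `ρ_{≥ n}`: the least `k` such that `i` belongs to
the second component of `ρ (n + k)`, and `⊤` if there is no such `k`. -/
noncomputable def costFrom (ρ : ℕ → XV V P) (n : ℕ) (i : P) : ℕ∞ :=
  sInf ((fun k : ℕ => (k : ℕ∞)) '' {k | i ∈ (ρ (n + k)).2})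

/-- Cost of player `i` along the play `ρ` of the extended game. -/
noncomputable def cost (ρ : ℕ → XV V P) (i : P) : ℕ∞ := costFrom ρ 0 i

/-- `λ`-consistency of a play. -/
def Consistent (own : V → P) (lam : XV V P → ℕ∞) (ρ : ℕ → XV V P) : Prop :=
  ∀ n, costFrom ρ n (own (ρ n).1) ≤ lam (ρ n)

/-- The set `Λ(x)` of `λ`-consistent plays from `x`. -/
def Lam (E : V → V → Prop) (F : P → Set V) (own : V → P) (lam : XV V P → ℕ∞)
    (x : XV V P) : Set (ℕ → XV V P) :=
  {ρ | IsPlay E F x ρ ∧ Consistent own lam ρ}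

/-- The initial labeling `λ⁰`. -/
noncomputable def lam0 (own : V → P) : XV V P → ℕ∞ :=
  fun v => if own v.1 ∈ v.2 then 0 else ⊤

/-- The labeling update operator. -/
noncomputable def update (E : V → V → Prop) (F : P → Set V) (own : V → P)
    (lam : XV V P → ℕ∞) (v : XV V P) : ℕ∞ :=
  if own v.1 ∈ v.2 then 0
  else ⨅ w ∈ {w : XV V P | XEdge E F v w},
    (1 + sSup ((fun ρ => cost ρ (own v.1)) '' Lam E F own lam w))

lemma Lam_mono {E : V → V → Prop} {F : P → Set V} {own : V → P}
    {lam lam' : XV V P → ℕ∞} (h : ∀ v, lam v ≤ lam' v) (x : XV V P) :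
    Lam E F own lam x ⊆ Lam E F own lam' x := by
  intro ρ ⟨hp, hc⟩
  exact ⟨hp, fun n => (hc n).trans (h _)⟩

lemma update_mono {E : V → V → Prop} {F : P → Set V} {own : V → P}
    {lam lam' : XV V P → ℕ∞} (h : ∀ v, lam v ≤ lam' v) (v : XV V P) :
    update E F own lam v ≤ update E F own lam' v := by
  unfold update
  split
  · exact le_refl _
  · refine iInf₂_mono fun w hw => add_le_add_right (sSup_le_sSup ?_) 1
    exact Set.image_mono (Lam_mono h w)

lemma update_le {E : V → V → Prop} {F : P → Set V} {own : V → P}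
    {lam : ℕ → XV V P → ℕ∞} (h0 : lam 0 = lam0 own)
    (hstep : ∀ k w, lam (k + 1) w = lam k w ∨
      lam (k + 1) w = update E F own (lam k) w) :
    ∀ k (v : XV V P), update E F own (lam k) v ≤ lam k v := by
  intro k
  induction k with
  | zero =>
    intro v
    rw [h0]
    unfold update lam0
    split
    · exact le_refl _
    · exact le_top
  | succ k ih =>
    have hle : ∀ v, lam (k + 1) v ≤ lam k v := by
      intro v
      rcases hstep k v with h | h
      · exact h.le
      · exact h.le.trans (ih v)
    intro v
    refine (update_mono hle v).trans ?_
    rcases hstep k v with h | h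
    · rw [h]; exact ih v
    · rw [h]

/-- the labeling sequence computed by the fixpoint iteration (starting
from `λ⁰`, each step either keeping a value or applying the update operator) is
pointwise non-increasing, and so are the sets of consistent plays. -/
theorem stmt4 {V P : Type*} (E : V → V → Prop) (F : P → Set V) (own : V → P)
    (lam : ℕ → XV V P → ℕ∞) (h0 : lam 0 = lam0 own)
    (hstep : ∀ k w, lam (k + 1) w = lam k w ∨
      lam (k + 1) w = update E F own (lam k) w) :
    ∀ k (v : XV V P), lam (k + 1) v ≤ lam k v ∧
      Lam E F own (lam (k + 1)) v ⊆ Lam E F own (lam k) v := by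
  intro k v
  have hle : ∀ w, lam (k + 1) w ≤ lam k w := by
    intro w
    rcases hstep k w with h | h
    · exact h.le
    · exact h.le.trans (update_le h0 hstep k w)
  exact ⟨hle v, Lam_mono hle v⟩

end SPE
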